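/- arXiv:1509.03532 — 4 statements merged into one kernel-verified Lean document; each statement's English description precedes it below -/
import Mathlib

section
/- Let r : C1 → C2 be an F-linear exact (triangulated) functor between F-linear triangulated categories equipped with weight structures. Assume (1) r is weight exact, and (2) the induced functor r_{w=0} : C_{1,w=0} → C_{2,w=0} on hearts is full. Then for every integer n and all objects X ∈ C_{1,w≤n} and Z ∈ C_{1,w≥n}, the map r : Hom_{C1}(X, Z) → Hom_{C2}(r(X), r(Z)) is surjective. -/
open CategoryTheory CategoryTheory.Limits CategoryTheory.Pretriangulated

namespace Paper

/-- A morphism `f : X ⟶ Y` belongs to the radical of a preadditive category if,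
for every `g : Y ⟶ X`, the endomorphism `𝟙 X - g ∘ f` is invertible. -/
def InRadical {C : Type*} [Category C] [Preadditive C] {X Y : C} (f : X ⟶ Y) : Prop :=
  ∀ g : Y ⟶ X, IsIso (𝟙 X - f ≫ g)

/-- The Jacobson radical of a (possibly noncommutative) ring, as a two-sided ideal. -/
def ringRadical (R : Type*) [Ring R] : TwoSidedIdeal R :=
  TwoSidedIdeal.jacobson ⊥

/-- A ring is semi-primary if its (Jacobson) radical is nilpotent and the quotient by
the radical is a semisimple ring. -/
def IsSemiprimaryRing (R : Type*) [Ring R] : Prop :=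
  IsSemisimpleRing (ringRadical R).ringCon.Quotient ∧
    ∃ n : ℕ, ∀ f : Fin n → R, (∀ i, f i ∈ ringRadical R) → (List.ofFn f).prod = 0

/-- A class of objects of a preadditive category is semi-primary (André–Kahn) if the
endomorphism ring of each of its objects is a semi-primary ring; for an object `X`,
the radical ideal `rad(X,X)` is exactly the Jacobson radical of `End X`. -/
def SemiprimaryOn {C : Type*} [Category C] [Preadditive C] (P : Set C) : Prop :=
  ∀ X : C, X ∈ P → IsSemiprimaryRing (CategoryTheory.End X)

/-- A class of objects is pseudo-Abelian (idempotent complete) if every idempotent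
endomorphism of one of its objects splits through an object of the class. -/
def PseudoAbelianOn {C : Type*} [Category C] [Preadditive C] (P : Set C) : Prop :=
  ∀ X : C, X ∈ P → ∀ e : X ⟶ X, e ≫ e = e →
    ∃ (Y : C) (_ : Y ∈ P) (p : X ⟶ Y) (i : Y ⟶ X), p ≫ i = e ∧ i ≫ p = 𝟙 Y

variable (C : Type*) [Category C] [Preadditive C] [HasZeroObject C] [HasShift C ℤ]
  [∀ n : ℤ, (CategoryTheory.shiftFunctor C n).Additive] [Pretriangulated C]

/-- A weight structure on a pretriangulated category: classes `le = C_{w≤0}` and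
`ge = C_{w≥0}`, additive (containing zero objects, closed under finite direct sums)
and closed under retracts, with `C_{w≤0} ⊆ C_{w≤1}`, `C_{w≥1} ⊆ C_{w≥0}`,
orthogonality, and existence of weight decompositions. -/
structure WeightStructure where
  le : Set C
  ge : Set C
  le_retract : ∀ {X Y : C} (i : X ⟶ Y) (p : Y ⟶ X), i ≫ p = 𝟙 X → Y ∈ le → X ∈ le
  ge_retract : ∀ {X Y : C} (i : X ⟶ Y) (p : Y ⟶ X), i ≫ p = 𝟙 X → Y ∈ ge → X ∈ ge
  le_zero : ∀ X : C, IsZero X → X ∈ le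
  ge_zero : ∀ X : C, IsZero X → X ∈ ge
  le_add : ∀ {X Y : C} (b : BinaryBicone X Y), b.IsBilimit → X ∈ le → Y ∈ le → b.pt ∈ le
  ge_add : ∀ {X Y : C} (b : BinaryBicone X Y), b.IsBilimit → X ∈ ge → Y ∈ ge → b.pt ∈ ge
  le_shift : ∀ X : C, X ∈ le → X⟦(-1 : ℤ)⟧ ∈ le
  ge_shift : ∀ X : C, X ∈ ge → X⟦(1 : ℤ)⟧ ∈ ge
  orthogonal : ∀ {X Y : C}, X ∈ le → Y⟦(-1 : ℤ)⟧ ∈ ge → ∀ f : X ⟶ Y, f = 0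
  exists_decomp : ∀ M : C, ∃ (A B : C) (f : A ⟶ M) (g : M ⟶ B) (h : B ⟶ A⟦(1 : ℤ)⟧),
    (Triangle.mk f g h ∈ distTriang C) ∧ A ∈ le ∧ B⟦(-1 : ℤ)⟧ ∈ ge

namespace WeightStructure

variable {C} (w : WeightStructure C)

/-- `C_{w ≤ n} := C_{w ≤ 0}[n]`. -/
def leN (n : ℤ) : Set C := {X : C | X⟦-n⟧ ∈ w.le}

/-- `C_{w ≥ n} := C_{w ≥ 0}[n]`. -/
def geN (n : ℤ) : Set C := {X : C | X⟦-n⟧ ∈ w.ge}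

/-- The heart `C_{w = 0} = C_{w ≤ 0} ∩ C_{w ≥ 0}`. -/
def heart : Set C := w.leN 0 ∩ w.geN 0

/-- The weight structure is bounded if every object lies in
`C_{w ≥ m} ∩ C_{w ≤ n}` for some integers `m ≤ n`. -/
def Bounded : Prop := ∀ M : C, ∃ m n : ℤ, m ≤ n ∧ M ∈ w.geN m ∧ M ∈ w.leN n

end WeightStructure

/-- A weight filtration of `M` concentrated at `n`: an exact triangle
`M_{≤ n-1} ⟶ M ⟶ M_{≥ n} ⟶(δ) M_{≤ n-1}[1]` with the two outer terms in
`C_{w ≤ n-1}` and `C_{w ≥ n}` respectively. -/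
def IsWeightFiltrationAt {C : Type*} [Category C] [Preadditive C] [HasZeroObject C]
    [HasShift C ℤ] [∀ n : ℤ, (CategoryTheory.shiftFunctor C n).Additive] [Pretriangulated C]
    (w : WeightStructure C) (n : ℤ) {A M B : C}
    (f : A ⟶ M) (g : M ⟶ B) (δ : B ⟶ A⟦(1 : ℤ)⟧) : Prop :=
  (Triangle.mk f g δ ∈ distTriang C) ∧ A ∈ w.leN (n - 1) ∧ B ∈ w.geN n

/-- A minimal weight filtration concentrated at `n`: a weight filtration concentrated
at `n` whose connecting morphism lies in the radical. -/
def IsMinimalWeightFiltrationAt {C : Type*} [Category C] [Preadditive C] [HasZeroObject C]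
    [HasShift C ℤ] [∀ n : ℤ, (CategoryTheory.shiftFunctor C n).Additive] [Pretriangulated C]
    (w : WeightStructure C) (n : ℤ) {A M B : C}
    (f : A ⟶ M) (g : M ⟶ B) (δ : B ⟶ A⟦(1 : ℤ)⟧) : Prop :=
  IsWeightFiltrationAt w n f g δ ∧ InRadical δ

/-- `M` is without weights `α, α+1, …, β` if it admits a weight filtration avoiding
these weights. -/
def WithoutWeights {C : Type*} [Category C] [Preadditive C] [HasZeroObject C]
    [HasShift C ℤ] [∀ n : ℤ, (CategoryTheory.shiftFunctor C n).Additive] [Pretriangulated C]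
    (w : WeightStructure C) (α β : ℤ) (M : C) : Prop :=
  ∃ (A B : C) (f : A ⟶ M) (g : M ⟶ B) (δ : B ⟶ A⟦(1 : ℤ)⟧),
    (Triangle.mk f g δ ∈ distTriang C) ∧ A ∈ w.leN (α - 1) ∧ B ∈ w.geN (β + 1)

/-- A functor is weight exact if it respects both classes of the weight structures. -/
def WeightExact {C₁ : Type*} [Category C₁] [Preadditive C₁] [HasZeroObject C₁] [HasShift C₁ ℤ]
    [∀ n : ℤ, (CategoryTheory.shiftFunctor C₁ n).Additive] [Pretriangulated C₁]
    {C₂ : Type*} [Category C₂] [Preadditive C₂] [HasZeroObject C₂] [HasShift C₂ ℤ]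
    [∀ n : ℤ, (CategoryTheory.shiftFunctor C₂ n).Additive] [Pretriangulated C₂]
    (w₁ : WeightStructure C₁) (w₂ : WeightStructure C₂) (r : C₁ ⥤ C₂) : Prop :=
  (∀ X : C₁, X ∈ w₁.le → r.obj X ∈ w₂.le) ∧ (∀ X : C₁, X ∈ w₁.ge → r.obj X ∈ w₂.ge)


section Aux

variable {C : Type*} [Category C] [Preadditive C] [HasZeroObject C] [HasShift C ℤ]
  [∀ n : ℤ, (CategoryTheory.shiftFunctor C n).Additive] [Pretriangulated C]
  (w : WeightStructure C)

lemma le_of_iso {X Y : C} (e : X ≅ Y) (hY : Y ∈ w.le) : X ∈ w.le :=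
  w.le_retract e.hom e.inv e.hom_inv_id hY

lemma ge_of_iso {X Y : C} (e : X ≅ Y) (hY : Y ∈ w.ge) : X ∈ w.ge :=
  w.ge_retract e.hom e.inv e.hom_inv_id hY

/-- If `X ∈ C_{w ≤ -1}` (i.e. `X⟦1⟧ ∈ C_{w ≤ 0}`) and `Y ∈ C_{w ≥ 0}` then
`Hom(X, Y) = 0`. -/
lemma hom_zero_neg {X Y : C} (hX : X⟦(1:ℤ)⟧ ∈ w.le) (hY : Y ∈ w.ge) (f : X ⟶ Y) : f = 0 := by
  have hY' : (Y⟦(1:ℤ)⟧)⟦(-1:ℤ)⟧ ∈ w.ge :=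
    ge_of_iso w ((shiftFunctorCompIsoId C (1:ℤ) (-1:ℤ) (by omega)).app Y) hY
  have h : (shiftFunctor C (1:ℤ)).map f = 0 := w.orthogonal hX hY' _
  exact (shiftFunctor C (1:ℤ)).map_injective (by rw [h, Functor.map_zero])

/-- Weight decomposition at weight 0: `A → M → B` with `A ∈ C_{w ≤ -1}`, `B ∈ C_{w ≥ 0}`. -/
lemma decomp_zero (M : C) : ∃ (A B : C) (f : A ⟶ M) (g : M ⟶ B) (h : B ⟶ A⟦(1:ℤ)⟧),
    (Triangle.mk f g h ∈ distTriang C) ∧ A⟦(1:ℤ)⟧ ∈ w.le ∧ B ∈ w.ge := by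
  obtain ⟨A', B', f', g', h', hdist, hA', hB'⟩ := w.exists_decomp (M⟦(1:ℤ)⟧)
  have hshift := Pretriangulated.Triangle.shift_distinguished _ hdist (-1)
  set T' := (CategoryTheory.shiftFunctor (Triangle C) (-1)).obj (Triangle.mk f' g' h') with hT'
  let e : (M⟦(1:ℤ)⟧)⟦(-1:ℤ)⟧ ≅ M := (shiftFunctorCompIsoId C (1:ℤ) (-1:ℤ) (by omega)).app M
  have hobj₁ : T'.obj₁ = A'⟦(-1:ℤ)⟧ := rfl
  have hobj₂ : T'.obj₂ = (M⟦(1:ℤ)⟧)⟦(-1:ℤ)⟧ := rfl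
  have hobj₃ : T'.obj₃ = B'⟦(-1:ℤ)⟧ := rfl
  refine ⟨A'⟦(-1:ℤ)⟧, B'⟦(-1:ℤ)⟧, T'.mor₁ ≫ e.hom, e.inv ≫ T'.mor₂, T'.mor₃,
    isomorphic_distinguished _ hshift _ ?_, ?_, ?_⟩
  · exact Triangle.isoMk _ _ (Iso.refl _) e.symm (Iso.refl _)
      (by show (T'.mor₁ ≫ e.hom) ≫ e.inv = 𝟙 T'.obj₁ ≫ T'.mor₁; exact (Category.assoc _ _ _).trans ((congrArg (T'.mor₁ ≫ ·) e.hom_inv_id).trans ((Category.comp_id _).trans (Category.id_comp _).symm))) (by show (e.inv ≫ T'.mor₂) ≫ 𝟙 T'.obj₃ = e.inv ≫ T'.mor₂; simp) (by show T'.mor₃ ≫ (shiftFunctor C (1:ℤ)).map (𝟙 T'.obj₁) = 𝟙 T'.obj₃ ≫ T'.mor₃; simp)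
  · exact le_of_iso w ((shiftFunctorCompIsoId C (-1:ℤ) (1:ℤ) (by omega)).app A') hA'
  · exact hB'

/-- `C_{w ≤ 0}` is closed under extensions. -/
lemma ext_le {T : Triangle C} (hT : T ∈ distTriang C) (h₁ : T.obj₁ ∈ w.le)
    (h₃ : T.obj₃ ∈ w.le) : T.obj₂ ∈ w.le := by
  obtain ⟨A, B, a, b, d, hdist, hA, hB⟩ := w.exists_decomp T.obj₂
  have h1 : T.mor₁ ≫ b = 0 := w.orthogonal h₁ hB _
  obtain ⟨c, hc⟩ := Triangle.yoneda_exact₂ T hT b h1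
  have hb : b = 0 := by rw [hc, w.orthogonal h₃ hB c, comp_zero]
  obtain ⟨p, hp⟩ := Triangle.coyoneda_exact₂ _ hdist (𝟙 T.obj₂)
    (by change 𝟙 T.obj₂ ≫ b = 0; rw [hb, comp_zero])
  exact w.le_retract p a hp.symm hA

/-- `C_{w ≥ 0}` is closed under extensions. -/
lemma ext_ge {T : Triangle C} (hT : T ∈ distTriang C) (h₁ : T.obj₁ ∈ w.ge)
    (h₃ : T.obj₃ ∈ w.ge) : T.obj₂ ∈ w.ge := by
  obtain ⟨A, B, a, b, d, hdist, hA, hB⟩ := decomp_zero w T.obj₂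
  have h1 : a ≫ T.mor₂ = 0 := hom_zero_neg w hA h₃ _
  obtain ⟨e, he⟩ := Triangle.coyoneda_exact₂ T hT a h1
  have ha : a = 0 := by rw [he, hom_zero_neg w hA h₁ e, zero_comp]
  obtain ⟨s, hs⟩ := Triangle.yoneda_exact₂ _ hdist (𝟙 T.obj₂)
    (by change a ≫ 𝟙 T.obj₂ = 0; rw [ha, zero_comp])
  exact w.ge_retract b s hs.symm hB

lemma mem_heart {X : C} (h1 : X ∈ w.le) (h2 : X ∈ w.ge) : X ∈ w.heart := by
  have e : X⟦(0:ℤ)⟧ ≅ X := (shiftFunctorZero C ℤ).app X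
  constructor
  · show X⟦(-(0:ℤ))⟧ ∈ w.le
    rw [neg_zero]
    exact le_of_iso w e h1
  · show X⟦(-(0:ℤ))⟧ ∈ w.ge
    rw [neg_zero]
    exact ge_of_iso w e h2

end Aux

/-- The key case `n = 0` of the theorem. -/
lemma statement0_zero
    {C₁ : Type*} [Category C₁] [Preadditive C₁] [HasZeroObject C₁] [HasShift C₁ ℤ]
    [∀ n : ℤ, (CategoryTheory.shiftFunctor C₁ n).Additive] [Pretriangulated C₁]
    {C₂ : Type*} [Category C₂] [Preadditive C₂] [HasZeroObject C₂] [HasShift C₂ ℤ]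
    [∀ n : ℤ, (CategoryTheory.shiftFunctor C₂ n).Additive] [Pretriangulated C₂]
    (w₁ : WeightStructure C₁) (w₂ : WeightStructure C₂)
    (r : C₁ ⥤ C₂) [r.Additive] [r.CommShift ℤ] [r.IsTriangulated]
    (hwe : WeightExact w₁ w₂ r)
    (hfull : ∀ X Y : C₁, X ∈ w₁.heart → Y ∈ w₁.heart →
      ∀ g : r.obj X ⟶ r.obj Y, ∃ f : X ⟶ Y, r.map f = g)
    (X Z : C₁) (hX : X ∈ w₁.le) (hZ : Z ∈ w₁.ge)
    (β : r.obj X ⟶ r.obj Z) :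
    ∃ f : X ⟶ Z, r.map f = β := by
  -- weight decomposition of X at weight 0
  obtain ⟨A, B, f, g, h, hdist, hA, hB⟩ := decomp_zero w₁ X
  -- B is in the heart: B ∈ w≥0 by construction, B ∈ w≤0 by extension closedness
  have hBle : B ∈ w₁.le := ext_le w₁ (rot_of_distTriang _ hdist) hX hA
  have hBheart : B ∈ w₁.heart := mem_heart w₁ hBle hB
  -- weight decomposition of Z at weight 1
  obtain ⟨Z₀, Z₁, i, p, d, hdistZ, hZ₀le, hZ₁⟩ := w₁.exists_decomp Z
  -- Z₀ is in the heart
  have hZ₀ge : Z₀ ∈ w₁.ge := ext_ge w₁ (inv_rot_of_distTriang _ hdistZ) hZ₁ hZ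
  have hZ₀heart : Z₀ ∈ w₁.heart := mem_heart w₁ hZ₀le hZ₀ge
  -- r(A) ∈ C₂,{w ≤ -1} and r(Z) ∈ C₂,{w ≥ 0}, so r(f) ≫ β = 0
  have hrA : (r.obj A)⟦(1:ℤ)⟧ ∈ w₂.le :=
    le_of_iso w₂ ((r.commShiftIso (1:ℤ)).symm.app A) (hwe.1 _ hA)
  have hβf : r.map f ≫ β = 0 := hom_zero_neg w₂ hrA (hwe.2 Z hZ) _
  -- lift β through r(g) : r(X) → r(B)
  obtain ⟨γ, hγ⟩ := Triangle.yoneda_exact₂ _ (r.map_distinguished _ hdist) β hβf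
  -- γ : r(B) → r(Z); compose with r(p) : r(Z) → r(Z₁) vanishes
  have hrZ₁ : (r.obj Z₁)⟦(-1:ℤ)⟧ ∈ w₂.ge :=
    ge_of_iso w₂ ((r.commShiftIso (-1:ℤ)).symm.app Z₁) (hwe.2 _ hZ₁)
  have hγp : γ ≫ r.map p = 0 := w₂.orthogonal (hwe.1 B hBle) hrZ₁ _
  obtain ⟨δ, hδ⟩ := Triangle.coyoneda_exact₂ _ (r.map_distinguished _ hdistZ) γ hγp
  -- δ : r(B) → r(Z₀); lift to C₁ by fullness on hearts
  obtain ⟨f₀, hf₀⟩ := hfull B Z₀ hBheart hZ₀heart δ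
  refine ⟨g ≫ f₀ ≫ i, ?_⟩
  have hδ' : γ = δ ≫ r.map i := hδ
  have hγ' : β = r.map g ≫ γ := hγ
  rw [r.map_comp, r.map_comp, hf₀, hγ', hδ']; rfl

theorem statement0
    (F : Type*) [Field F] [CharZero F]
    {C₁ : Type*} [Category C₁] [Preadditive C₁] [HasZeroObject C₁] [HasShift C₁ ℤ]
    [∀ n : ℤ, (CategoryTheory.shiftFunctor C₁ n).Additive] [Pretriangulated C₁] [CategoryTheory.Linear F C₁]
    {C₂ : Type*} [Category C₂] [Preadditive C₂] [HasZeroObject C₂] [HasShift C₂ ℤ]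
    [∀ n : ℤ, (CategoryTheory.shiftFunctor C₂ n).Additive] [Pretriangulated C₂] [CategoryTheory.Linear F C₂]
    (w₁ : WeightStructure C₁) (w₂ : WeightStructure C₂)
    (r : C₁ ⥤ C₂) [r.Additive] [Functor.Linear F r] [r.CommShift ℤ] [r.IsTriangulated]
    (hwe : WeightExact w₁ w₂ r)
    (hfull : ∀ X Y : C₁, X ∈ w₁.heart → Y ∈ w₁.heart →
      ∀ g : r.obj X ⟶ r.obj Y, ∃ f : X ⟶ Y, r.map f = g)
    (n : ℤ) (X Z : C₁) (hX : X ∈ w₁.leN n) (hZ : Z ∈ w₁.geN n)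
    (β : r.obj X ⟶ r.obj Z) :
    ∃ f : X ⟶ Z, r.map f = β := by
  have hX' : X⟦(-n:ℤ)⟧ ∈ w₁.le := hX
  have hZ' : Z⟦(-n:ℤ)⟧ ∈ w₁.ge := hZ
  -- transport β along the shift by -n
  let β' : r.obj (X⟦(-n:ℤ)⟧) ⟶ r.obj (Z⟦(-n:ℤ)⟧) :=
    (r.commShiftIso (-n:ℤ)).hom.app X ≫ (shiftFunctor C₂ (-n:ℤ)).map β ≫
      (r.commShiftIso (-n:ℤ)).inv.app Z
  obtain ⟨f', hf'⟩ := statement0_zero w₁ w₂ r hwe hfull _ _ hX' hZ' β'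
  refine ⟨(shiftFunctor C₁ (-n:ℤ)).preimage f', ?_⟩
  apply (shiftFunctor C₂ (-n:ℤ)).map_injective
  have hnat := (r.commShiftIso (-n:ℤ)).hom.naturality ((shiftFunctor C₁ (-n:ℤ)).preimage f')
  dsimp at hnat
  rw [Functor.map_preimage] at hnat
  rw [hf'] at hnat
  simp only [β', Category.assoc, Iso.inv_hom_id_app, Functor.comp_obj, Category.comp_id] at hnat
  -- hnat : hom.app X ≫ (shift).map β = hom.app X ≫ (shift).map (r.map (preimage f'))? check direction
  have := hnat
  rw [← cancel_epi ((r.commShiftIso (-n:ℤ)).hom.app X)]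
  exact this.symm

end Paper
end

section
/- Let r : C1 → C2 be an F-linear exact (triangulated) functor between F-linear triangulated categories equipped with weight structures. Assume: (1) the weight structure on C1 is bounded; (2) the heart C_{1,w=0} is semi-primary and pseudo-Abelian; (3) r is weight exact; (4) the induced functor r_{w=0} on hearts is full; (5) r_{w=0} is conservative. Then r is conservative, i.e., any morphism f in C1 such that r(f) is an isomorphism is itself an isomorphism. -/
open CategoryTheory CategoryTheory.Limits CategoryTheory.Pretriangulated

namespace Paper

variable (C : Type*) [Category C] [Preadditive C] [HasZeroObject C] [HasShift C ℤ]
  [∀ n : ℤ, (CategoryTheory.shiftFunctor C n).Additive] [Pretriangulated C]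

section Aux

variable {C : Type*} [Category C] [Preadditive C] [HasZeroObject C] [HasShift C ℤ]
  [∀ n : ℤ, (CategoryTheory.shiftFunctor C n).Additive] [Pretriangulated C]

namespace WeightStructure

variable (w : WeightStructure C)

lemma mem_le_of_iso {X Y : C} (e : X ≅ Y) (h : Y ∈ w.le) : X ∈ w.le :=
  w.le_retract e.hom e.inv e.hom_inv_id h

lemma mem_ge_of_iso {X Y : C} (e : X ≅ Y) (h : Y ∈ w.ge) : X ∈ w.ge :=
  w.ge_retract e.hom e.inv e.hom_inv_id h

lemma mem_leN_of_iso {X Y : C} (e : X ≅ Y) {n : ℤ} (h : Y ∈ w.leN n) : X ∈ w.leN n :=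
  w.mem_le_of_iso ((shiftFunctor C (-n)).mapIso e) h

lemma mem_geN_of_iso {X Y : C} (e : X ≅ Y) {n : ℤ} (h : Y ∈ w.geN n) : X ∈ w.geN n :=
  w.mem_ge_of_iso ((shiftFunctor C (-n)).mapIso e) h

lemma shift_mem_leN {X : C} {a : ℤ} (h : X ∈ w.leN a) (j b : ℤ) (hb : a + j = b) :
    X⟦j⟧ ∈ w.leN b := by
  subst hb
  exact w.mem_le_of_iso ((shiftFunctorAdd' C j (-(a + j)) (-a) (by ring)).symm.app X) h

lemma shift_mem_geN {X : C} {a : ℤ} (h : X ∈ w.geN a) (j b : ℤ) (hb : a + j = b) :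
    X⟦j⟧ ∈ w.geN b := by
  subst hb
  exact w.mem_ge_of_iso ((shiftFunctorAdd' C j (-(a + j)) (-a) (by ring)).symm.app X) h

lemma mem_leN_succ {X : C} {a : ℤ} (h : X ∈ w.leN a) : X ∈ w.leN (a + 1) :=
  w.mem_le_of_iso ((shiftFunctorAdd' C (-a) (-1) (-(a + 1)) (by ring)).app X) (w.le_shift _ h)

lemma mem_geN_pred {X : C} {a : ℤ} (h : X ∈ w.geN a) : X ∈ w.geN (a - 1) :=
  w.mem_ge_of_iso ((shiftFunctorAdd' C (-a) 1 (-(a - 1)) (by ring)).app X) (w.ge_shift _ h)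

lemma mem_leN_of_le {X : C} {a b : ℤ} (hab : a ≤ b) (h : X ∈ w.leN a) : X ∈ w.leN b := by
  obtain ⟨k, rfl⟩ := Int.le.dest hab
  clear hab
  induction k with
  | zero => simpa using h
  | succ k ih =>
    have h2 := w.mem_leN_succ ih
    have he : a + ((k + 1 : ℕ) : ℤ) = (a + (k : ℕ)) + 1 := by push_cast; ring
    rw [he]
    exact h2

lemma mem_geN_of_ge {X : C} {a b : ℤ} (hab : a ≤ b) (h : X ∈ w.geN b) : X ∈ w.geN a := by
  obtain ⟨k, rfl⟩ := Int.le.dest hab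
  clear hab
  induction k with
  | zero => simpa using h
  | succ k ih =>
    refine ih ?_
    have h2 := w.mem_geN_pred h
    have he : a + ((k + 1 : ℕ) : ℤ) - 1 = a + (k : ℕ) := by push_cast; ring
    rwa [he] at h2

lemma hom_eq_zero {X Y : C} {a b : ℤ} (hab : a < b) (hX : X ∈ w.leN a) (hY : Y ∈ w.geN b)
    (f : X ⟶ Y) : f = 0 := by
  have hY' : Y ∈ w.geN (a + 1) := w.mem_geN_of_ge hab hY
  have hY'' : (Y⟦-a⟧)⟦(-1 : ℤ)⟧ ∈ w.ge :=
    w.mem_ge_of_iso ((shiftFunctorAdd' C (-a) (-1) (-(a + 1)) (by ring)).symm.app Y) hY'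
  have := w.orthogonal hX hY'' ((shiftFunctor C (-a)).map f)
  apply (shiftFunctor C (-a)).map_injective
  rw [this, Functor.map_zero]

lemma isZero_mem_leN {X : C} (h : IsZero X) (n : ℤ) : X ∈ w.leN n :=
  w.le_zero _ ((shiftFunctor C (-n)).map_isZero h)

lemma isZero_mem_geN {X : C} (h : IsZero X) (n : ℤ) : X ∈ w.geN n :=
  w.ge_zero _ ((shiftFunctor C (-n)).map_isZero h)

lemma mem_leN_of_retract {X Y : C} (i : X ⟶ Y) (p : Y ⟶ X) (hip : i ≫ p = 𝟙 X) {n : ℤ}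
    (h : Y ∈ w.leN n) : X ∈ w.leN n :=
  w.le_retract ((shiftFunctor C (-n)).map i) ((shiftFunctor C (-n)).map p)
    (by rw [← (shiftFunctor C (-n)).map_comp, hip, (shiftFunctor C (-n)).map_id]) h

lemma mem_geN_of_retract {X Y : C} (i : X ⟶ Y) (p : Y ⟶ X) (hip : i ≫ p = 𝟙 X) {n : ℤ}
    (h : Y ∈ w.geN n) : X ∈ w.geN n :=
  w.ge_retract ((shiftFunctor C (-n)).map i) ((shiftFunctor C (-n)).map p)
    (by rw [← (shiftFunctor C (-n)).map_comp, hip, (shiftFunctor C (-n)).map_id]) h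

/-- Weight decompositions exist at every level `k`. -/
lemma exists_decomp_at (M : C) (k : ℤ) :
    ∃ (A B : C) (f : A ⟶ M) (g : M ⟶ B) (δ : B ⟶ A⟦(1 : ℤ)⟧),
      (Triangle.mk f g δ ∈ distTriang C) ∧ A ∈ w.leN (k - 1) ∧ B ∈ w.geN k := by
  obtain ⟨A₀, B₀, f₀, g₀, δ₀, hT₀, hA₀, hB₀⟩ := w.exists_decomp (M⟦-(k - 1)⟧)
  have hT₁ := Triangle.shift_distinguished _ hT₀ (k - 1)
  set T₁ := (CategoryTheory.shiftFunctor (Triangle C) (k - 1)).obj (Triangle.mk f₀ g₀ δ₀) with hT₁def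
  let e : (M⟦-(k - 1)⟧)⟦k - 1⟧ ≅ M := (shiftFunctorCompIsoId C (-(k - 1)) (k - 1) (by ring)).app M
  refine ⟨A₀⟦k - 1⟧, B₀⟦k - 1⟧, T₁.mor₁ ≫ e.hom, e.inv ≫ T₁.mor₂, T₁.mor₃, ?_, ?_, ?_⟩
  · refine isomorphic_distinguished _ hT₁ _ ?_
    exact Triangle.isoMk _ _ (Iso.refl _) e.symm (Iso.refl _)
      (by exact (Category.assoc _ _ _).trans ((congrArg (fun x => T₁.mor₁ ≫ x) e.hom_inv_id).trans
        ((Category.comp_id _).trans (Category.id_comp _).symm)))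
      (by exact Category.comp_id _)
      (by exact (congrArg (fun x => T₁.mor₃ ≫ x) ((shiftFunctor C (1 : ℤ)).map_id _)).trans
            ((Category.comp_id _).trans (Category.id_comp _).symm))
  · have hA₀' : A₀ ∈ w.leN 0 :=
      w.mem_le_of_iso ((shiftFunctorZero C ℤ).app A₀ : A₀⟦(0 : ℤ)⟧ ≅ A₀)
        (by simpa using hA₀)
    exact w.shift_mem_leN (by simpa using hA₀') (k - 1) (k - 1) (by ring)
  · exact w.shift_mem_geN (show B₀ ∈ w.geN 1 from hB₀) (k - 1) k (by ring)

lemma mem_leN_ext {T : Triangle C} (hT : T ∈ distTriang C) {n : ℤ}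
    (h₁ : T.obj₁ ∈ w.leN n) (h₃ : T.obj₃ ∈ w.leN n) : T.obj₂ ∈ w.leN n := by
  obtain ⟨A, B, f, g, δ, hT', hA, hB⟩ := w.exists_decomp_at T.obj₂ (n + 1)
  have hg0 : g = 0 := by
    have h1 : T.mor₁ ≫ g = 0 :=
      w.hom_eq_zero (a := n) (b := n + 1) (by omega) h₁ (by simpa using hB) _
    obtain ⟨h, hh⟩ := Triangle.yoneda_exact₂ T hT g h1
    rw [hh, w.hom_eq_zero (a := n) (b := n + 1) (by omega) h₃ (by simpa using hB) h, comp_zero]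
  obtain ⟨s, hs⟩ := Triangle.coyoneda_exact₂ (Triangle.mk f g δ) hT' (𝟙 T.obj₂)
    (by show 𝟙 T.obj₂ ≫ g = 0; rw [hg0, comp_zero])
  exact w.mem_leN_of_retract s f hs.symm (by simpa using hA)

lemma mem_geN_ext {T : Triangle C} (hT : T ∈ distTriang C) {n : ℤ}
    (h₁ : T.obj₁ ∈ w.geN n) (h₃ : T.obj₃ ∈ w.geN n) : T.obj₂ ∈ w.geN n := by
  obtain ⟨A, B, f, g, δ, hT', hA, hB⟩ := w.exists_decomp_at T.obj₂ n
  have hf0 : f = 0 := by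
    have h1 : f ≫ T.mor₂ = 0 := w.hom_eq_zero (a := n - 1) (b := n) (by omega) hA h₃ _
    obtain ⟨q, hq⟩ := Triangle.coyoneda_exact₂ T hT f h1
    rw [hq, w.hom_eq_zero (a := n - 1) (b := n) (by omega) hA h₁ q, zero_comp]
  obtain ⟨h, hh⟩ := Triangle.yoneda_exact₂ (Triangle.mk f g δ) hT' (𝟙 T.obj₂)
    (by show f ≫ 𝟙 T.obj₂ = 0; rw [hf0, zero_comp])
  exact w.mem_geN_of_retract g h hh.symm hB

end WeightStructure

end Aux

section Funct

variable {C₁ : Type*} [Category C₁] [Preadditive C₁] [HasZeroObject C₁] [HasShift C₁ ℤ]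
  [∀ n : ℤ, (CategoryTheory.shiftFunctor C₁ n).Additive] [Pretriangulated C₁]
  {C₂ : Type*} [Category C₂] [Preadditive C₂] [HasZeroObject C₂] [HasShift C₂ ℤ]
  [∀ n : ℤ, (CategoryTheory.shiftFunctor C₂ n).Additive] [Pretriangulated C₂]

lemma map_mem_leN (w₁ : WeightStructure C₁) (w₂ : WeightStructure C₂)
    (r : C₁ ⥤ C₂) [r.CommShift ℤ] (hwe : WeightExact w₁ w₂ r) {X : C₁} {n : ℤ}
    (h : X ∈ w₁.leN n) : r.obj X ∈ w₂.leN n :=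
  w₂.mem_le_of_iso ((r.commShiftIso (-n)).app X).symm (hwe.1 _ h)

lemma map_mem_geN (w₁ : WeightStructure C₁) (w₂ : WeightStructure C₂)
    (r : C₁ ⥤ C₂) [r.CommShift ℤ] (hwe : WeightExact w₁ w₂ r) {X : C₁} {n : ℤ}
    (h : X ∈ w₁.geN n) : r.obj X ∈ w₂.geN n :=
  w₂.mem_ge_of_iso ((r.commShiftIso (-n)).app X).symm (hwe.2 _ h)

/-- If `r` kills an object that is concentrated in a single weight, that
object is zero, by conservativity of `r` on the heart. -/
lemma isZero_of_isZero_map_heart (w₁ : WeightStructure C₁)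
    (r : C₁ ⥤ C₂) [r.Additive] [r.CommShift ℤ]
    (hcons : ∀ X Y : C₁, X ∈ w₁.heart → Y ∈ w₁.heart →
      ∀ f : X ⟶ Y, IsIso (r.map f) → IsIso f)
    {X : C₁} {m : ℤ} (hm : X ∈ w₁.geN m) (hn : X ∈ w₁.leN m)
    (hz : IsZero (r.obj X)) : IsZero X := by
  set X' := X⟦(-m : ℤ)⟧ with hX'def
  have hX' : X' ∈ w₁.heart :=
    ⟨w₁.shift_mem_leN hn (-m) 0 (by ring), w₁.shift_mem_geN hm (-m) 0 (by ring)⟩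
  have hz' : IsZero (r.obj X') :=
    ((shiftFunctor C₂ (-m)).map_isZero hz).of_iso ((r.commShiftIso (-m)).app X)
  have h0 : IsIso (r.map (0 : X' ⟶ X')) := by
    have : r.map (0 : X' ⟶ X') = 𝟙 (r.obj X') := hz'.eq_of_src _ _
    rw [this]; infer_instance
  have hiso : IsIso (0 : X' ⟶ X') := hcons X' X' hX' hX' 0 h0
  have hid : 𝟙 X' = 0 := by
    rw [← IsIso.hom_inv_id (0 : X' ⟶ X'), zero_comp]
  have hzX' : IsZero X' := by rw [IsZero.iff_id_eq_zero]; exact hid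
  exact ((shiftFunctor C₁ (m : ℤ)).map_isZero hzX').of_iso
    ((shiftFunctorCompIsoId C₁ (-m) m (by ring)).symm.app X)

/-- Main inductive lemma: a bounded object killed by a weight-exact functor whose
heart restriction is full and conservative must be zero. -/
lemma isZero_of_isZero_map (w₁ : WeightStructure C₁) (w₂ : WeightStructure C₂)
    (r : C₁ ⥤ C₂) [r.Additive] [r.CommShift ℤ] [r.IsTriangulated]
    (hwe : WeightExact w₁ w₂ r)
    (hfull : ∀ X Y : C₁, X ∈ w₁.heart → Y ∈ w₁.heart →
      ∀ g : r.obj X ⟶ r.obj Y, ∃ f : X ⟶ Y, r.map f = g)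
    (hcons : ∀ X Y : C₁, X ∈ w₁.heart → Y ∈ w₁.heart →
      ∀ f : X ⟶ Y, IsIso (r.map f) → IsIso f) :
    ∀ (k : ℕ) (X : C₁) (m n : ℤ), n ≤ m + k → X ∈ w₁.geN m → X ∈ w₁.leN n →
      IsZero (r.obj X) → IsZero X := by
  intro k
  induction k with
  | zero =>
    intro X m n hk hm hn hz
    exact isZero_of_isZero_map_heart w₁ r hcons hm
      (w₁.mem_leN_of_le (by omega) hn) hz
  | succ k ih =>
    intro X m n hk hm hn hz
    by_cases hnm : n ≤ m
    · exact isZero_of_isZero_map_heart w₁ r hcons hm (w₁.mem_leN_of_le hnm hn) hz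
    push_neg at hnm
    -- weight decomposition of `X` at `n`
    obtain ⟨A, B, f, g, δ, hT, hA, hB⟩ := w₁.exists_decomp_at X n
    have hBle : B ∈ w₁.leN n := by
      refine w₁.mem_leN_ext (rot_of_distTriang _ hT) hn ?_
      exact w₁.shift_mem_leN hA 1 n (by ring)
    have hAge : A ∈ w₁.geN m := by
      refine w₁.mem_geN_ext (inv_rot_of_distTriang _ hT) ?_ hm
      exact w₁.mem_geN_of_ge (by omega) (w₁.shift_mem_geN hB (-1) (n - 1) (by ring))
    -- `r.map δ` is an isomorphism since `r.obj X = 0`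
    have hrT := r.map_distinguished _ hT
    have hrδ : IsIso (r.map δ) := by
      have h3 : IsIso ((r.mapTriangle.obj (Triangle.mk f g δ)).mor₃) :=
        (Triangle.isZero₂_iff_isIso₃ _ hrT).1 (by simpa using hz)
      dsimp [Functor.mapTriangle] at h3
      have h3' : IsIso (r.map δ ≫ (r.commShiftIso (1 : ℤ)).hom.app A) := h3
      exact IsIso.of_isIso_comp_right (r.map δ) ((r.commShiftIso (1 : ℤ)).hom.app A)
    have hrA : r.obj A ∈ w₂.geN (n - 1) := by
      have h1 : r.obj (A⟦(1 : ℤ)⟧) ∈ w₂.geN n :=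
        w₂.mem_geN_of_iso (asIso (r.map δ)).symm (map_mem_geN w₁ w₂ r hwe hB)
      have h2 : (r.obj A)⟦(1 : ℤ)⟧ ∈ w₂.geN n :=
        w₂.mem_geN_of_iso ((r.commShiftIso (1 : ℤ)).app A).symm h1
      have h3 : ((r.obj A)⟦(1 : ℤ)⟧)⟦(-1 : ℤ)⟧ ∈ w₂.geN (n - 1) :=
        w₂.shift_mem_geN h2 (-1) (n - 1) (by ring)
      exact w₂.mem_geN_of_iso
        ((shiftFunctorCompIsoId C₂ (1 : ℤ) (-1) (by ring)).symm.app (r.obj A)) h3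
    -- weight decomposition of `A` at `n - 1`
    obtain ⟨A', B', f', π, δ₂, hT₂, hA', hB'⟩ := w₁.exists_decomp_at A (n - 1)
    have hB'le : B' ∈ w₁.leN (n - 1) := by
      refine w₁.mem_leN_ext (rot_of_distTriang _ hT₂) hA ?_
      exact w₁.shift_mem_leN hA' 1 (n - 1) (by ring)
    have hrf' : r.map f' = 0 :=
      w₂.hom_eq_zero (a := n - 1 - 1) (b := n - 1) (by omega)
        (map_mem_leN w₁ w₂ r hwe hA') hrA _
    obtain ⟨ρ, hρ⟩ : ∃ ρ : r.obj B' ⟶ r.obj A, 𝟙 (r.obj A) = r.map π ≫ ρ :=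
      Triangle.yoneda_exact₂ _ (r.map_distinguished _ hT₂) (𝟙 (r.obj A))
      (by show r.map f' ≫ 𝟙 (r.obj A) = 0; rw [Category.comp_id, hrf'])
    have hρ' : 𝟙 (r.obj A) = r.map π ≫ ρ := by
      simpa [Functor.mapTriangle] using hρ
    set u : B ⟶ B'⟦(1 : ℤ)⟧ := δ ≫ π⟦(1 : ℤ)⟧' with hu
    have hnat : r.map (π⟦(1 : ℤ)⟧') ≫ ((r.commShiftIso (1 : ℤ)).app B').hom =
        ((r.commShiftIso (1 : ℤ)).app A).hom ≫ (r.map π)⟦(1 : ℤ)⟧' :=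
      (r.commShiftIso (1 : ℤ)).hom.naturality π
    set ρu : r.obj (B'⟦(1 : ℤ)⟧) ⟶ r.obj B :=
      ((r.commShiftIso (1 : ℤ)).app B').hom ≫ ρ⟦(1 : ℤ)⟧' ≫
        ((r.commShiftIso (1 : ℤ)).app A).inv ≫ inv (r.map δ) with hρu
    have hsplit : r.map u ≫ ρu = 𝟙 (r.obj B) := by
      have hπρ : (r.map π)⟦(1 : ℤ)⟧' ≫ ρ⟦(1 : ℤ)⟧' = 𝟙 _ := by
        rw [← Functor.map_comp, ← hρ', CategoryTheory.Functor.map_id]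
      rw [hu, hρu, Functor.map_comp]
      slice_lhs 2 3 => rw [hnat]
      slice_lhs 3 4 => rw [hπρ]
      simp
    -- transport everything into the heart
    set XB := B⟦(-n : ℤ)⟧ with hXBdef
    set XB' := (B'⟦(1 : ℤ)⟧)⟦(-n : ℤ)⟧ with hXB'def
    have hXB : XB ∈ w₁.heart :=
      ⟨w₁.shift_mem_leN hBle (-n) 0 (by ring), w₁.shift_mem_geN hB (-n) 0 (by ring)⟩
    have hXB' : XB' ∈ w₁.heart :=
      ⟨w₁.shift_mem_leN (w₁.shift_mem_leN hB'le 1 n (by ring)) (-n) 0 (by ring),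
       w₁.shift_mem_geN (w₁.shift_mem_geN hB' 1 n (by ring)) (-n) 0 (by ring)⟩
    set ut : XB ⟶ XB' := u⟦(-n : ℤ)⟧' with hut
    have hnat2 : r.map (u⟦(-n : ℤ)⟧') ≫ ((r.commShiftIso (-n : ℤ)).app (B'⟦(1 : ℤ)⟧)).hom =
        ((r.commShiftIso (-n : ℤ)).app B).hom ≫ (r.map u)⟦(-n : ℤ)⟧' :=
      (r.commShiftIso (-n : ℤ)).hom.naturality u
    set ρt : r.obj XB' ⟶ r.obj XB :=
      ((r.commShiftIso (-n : ℤ)).app (B'⟦(1 : ℤ)⟧)).hom ≫ ρu⟦(-n : ℤ)⟧' ≫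
        ((r.commShiftIso (-n : ℤ)).app B).inv with hρt
    have hsplit2 : r.map ut ≫ ρt = 𝟙 (r.obj XB) := by
      have huρ : (r.map u)⟦(-n : ℤ)⟧' ≫ ρu⟦(-n : ℤ)⟧' = 𝟙 _ := by
        rw [← Functor.map_comp, hsplit, CategoryTheory.Functor.map_id]
      rw [hut, hρt]
      slice_lhs 1 2 => rw [hnat2]
      slice_lhs 2 3 => rw [huρ]
      simp
      rfl
    obtain ⟨σ, hσ⟩ := hfull XB' XB hXB' hXB ρt
    have hiso : IsIso (r.map (ut ≫ σ)) := by
      rw [Functor.map_comp, hσ, hsplit2]; infer_instance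
    have hiso2 : IsIso (ut ≫ σ) := hcons _ _ hXB hXB (ut ≫ σ) hiso
    -- lift `σ` along the shift
    set σ' : B'⟦(1 : ℤ)⟧ ⟶ B := (shiftFunctor C₁ (-n : ℤ)).preimage σ with hσ'
    have hiso3 : IsIso (u ≫ σ') := by
      have hmap : (shiftFunctor C₁ (-n : ℤ)).map (u ≫ σ') = ut ≫ σ := by
        rw [Functor.map_comp, Functor.map_preimage, hut]
      have : IsIso ((shiftFunctor C₁ (-n : ℤ)).map (u ≫ σ')) := by
        rw [hmap]; exact hiso2
      exact isIso_of_reflects_iso (u ≫ σ') (shiftFunctor C₁ (-n : ℤ))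
    set g₀ : A⟦(1 : ℤ)⟧ ⟶ B := π⟦(1 : ℤ)⟧' ≫ σ' ≫ inv (u ≫ σ') with hg₀
    have hδg : δ ≫ g₀ = 𝟙 B := by
      rw [hg₀]
      slice_lhs 1 3 => rw [show δ ≫ π⟦(1 : ℤ)⟧' ≫ σ' = u ≫ σ' by rw [hu, Category.assoc]]
      simp
    have hgzero : g = 0 := by
      have h23 : g ≫ δ = 0 := comp_distTriang_mor_zero₂₃ _ hT
      calc g = g ≫ (δ ≫ g₀) := by rw [hδg, Category.comp_id]
        _ = (g ≫ δ) ≫ g₀ := by rw [Category.assoc]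
        _ = 0 := by rw [h23, zero_comp]
    obtain ⟨s, hs⟩ := Triangle.coyoneda_exact₂ _ hT (𝟙 X) (by show 𝟙 X ≫ g = 0; rw [Category.id_comp, hgzero])
    -- hs : 𝟙 X = s ≫ f
    exact ih X m (n - 1) (by omega) (w₁.mem_geN_of_retract s f hs.symm hAge)
      (w₁.mem_leN_of_retract s f hs.symm hA) hz

end Funct

theorem statement2
    (F : Type*) [Field F] [CharZero F]
    {C₁ : Type*} [Category C₁] [Preadditive C₁] [HasZeroObject C₁] [HasShift C₁ ℤ]
    [∀ n : ℤ, (CategoryTheory.shiftFunctor C₁ n).Additive] [Pretriangulated C₁] [CategoryTheory.Linear F C₁]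
    {C₂ : Type*} [Category C₂] [Preadditive C₂] [HasZeroObject C₂] [HasShift C₂ ℤ]
    [∀ n : ℤ, (CategoryTheory.shiftFunctor C₂ n).Additive] [Pretriangulated C₂] [CategoryTheory.Linear F C₂]
    (w₁ : WeightStructure C₁) (w₂ : WeightStructure C₂)
    (r : C₁ ⥤ C₂) [r.Additive] [Functor.Linear F r] [r.CommShift ℤ] [r.IsTriangulated]
    (hbounded : w₁.Bounded)
    (hsemiprimary : SemiprimaryOn w₁.heart) (hpseudoabelian : PseudoAbelianOn w₁.heart)
    (hwe : WeightExact w₁ w₂ r)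
    (hfull : ∀ X Y : C₁, X ∈ w₁.heart → Y ∈ w₁.heart →
      ∀ g : r.obj X ⟶ r.obj Y, ∃ f : X ⟶ Y, r.map f = g)
    (hcons : ∀ X Y : C₁, X ∈ w₁.heart → Y ∈ w₁.heart →
      ∀ f : X ⟶ Y, IsIso (r.map f) → IsIso f)
    {M N : C₁} (f : M ⟶ N) (hf : IsIso (r.map f)) :
    IsIso f := by
  obtain ⟨Z, g, h, hT⟩ := Pretriangulated.distinguished_cocone_triangle f
  have hrT := r.map_distinguished _ hT
  have hrZ : IsZero (r.obj Z) := by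
    have h1 : IsIso ((r.mapTriangle.obj (Triangle.mk f g h)).mor₁) := by
      dsimp [Functor.mapTriangle]; exact hf
    exact Triangle.isZero₃_of_isIso₁ _ hrT h1
  obtain ⟨m, n, hmn, hgm, hln⟩ := hbounded Z
  have hZ : IsZero Z := isZero_of_isZero_map w₁ w₂ r hwe hfull hcons
    (n - m).toNat Z m n (by omega) hgm hln hrZ
  exact (Triangle.isZero₃_iff_isIso₁ _ hT).1 hZ

end Paper
end

section
/- Let r : C1 → C2 be an F-linear exact (triangulated) functor between F-linear triangulated categories equipped with weight structures. Assume: (1) the weight structure on C1 is bounded; (2) the heart C_{1,w=0} is semi-primary and pseudo-Abelian; (3) r is weight exact; (4) the induced functor r_{w=0} on hearts is full; (5) r_{w=0} is conservative. Then for any M ∈ C1: M lies in the heart C_{1,w=0} if and only if r(M) lies in the heart C_{2,w=0}. -/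
open CategoryTheory CategoryTheory.Limits CategoryTheory.Pretriangulated

namespace Paper

variable (C : Type*) [Category C] [Preadditive C] [HasZeroObject C] [HasShift C ℤ]
  [∀ n : ℤ, (CategoryTheory.shiftFunctor C n).Additive] [Pretriangulated C]

set_option linter.unusedSectionVars false

section Aux

namespace WeightStructure

variable {C : Type*} [Category C] [Preadditive C] [HasZeroObject C] [HasShift C ℤ]
  [∀ n : ℤ, (CategoryTheory.shiftFunctor C n).Additive] [Pretriangulated C]
  (w : WeightStructure C)

lemma le_iso {X Y : C} (e : X ≅ Y) (hY : Y ∈ w.le) : X ∈ w.le :=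
  w.le_retract e.hom e.inv e.hom_inv_id hY

lemma ge_iso {X Y : C} (e : X ≅ Y) (hY : Y ∈ w.ge) : X ∈ w.ge :=
  w.ge_retract e.hom e.inv e.hom_inv_id hY

lemma leN_retract {X Y : C} {k : ℤ} (i : X ⟶ Y) (p : Y ⟶ X) (h : i ≫ p = 𝟙 X)
    (hY : Y ∈ w.leN k) : X ∈ w.leN k :=
  w.le_retract ((shiftFunctor C (-k)).map i) ((shiftFunctor C (-k)).map p)
    (by rw [← Functor.map_comp, h, CategoryTheory.Functor.map_id]) hY

lemma geN_retract {X Y : C} {k : ℤ} (i : X ⟶ Y) (p : Y ⟶ X) (h : i ≫ p = 𝟙 X)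
    (hY : Y ∈ w.geN k) : X ∈ w.geN k :=
  w.ge_retract ((shiftFunctor C (-k)).map i) ((shiftFunctor C (-k)).map p)
    (by rw [← Functor.map_comp, h, CategoryTheory.Functor.map_id]) hY

lemma leN_iso {X Y : C} {k : ℤ} (e : X ≅ Y) (hY : Y ∈ w.leN k) : X ∈ w.leN k :=
  w.leN_retract e.hom e.inv e.hom_inv_id hY

lemma geN_iso {X Y : C} {k : ℤ} (e : X ≅ Y) (hY : Y ∈ w.geN k) : X ∈ w.geN k :=
  w.geN_retract e.hom e.inv e.hom_inv_id hY

lemma leN_shift {X : C} {k : ℤ} (a j : ℤ) (h : k + a = j) (hX : X ∈ w.leN k) :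
    X⟦a⟧ ∈ w.leN j :=
  w.le_iso (((shiftFunctorAdd' C a (-j) (-k) (by omega)).app X).symm) hX

lemma geN_shift {X : C} {k : ℤ} (a j : ℤ) (h : k + a = j) (hX : X ∈ w.geN k) :
    X⟦a⟧ ∈ w.geN j :=
  w.ge_iso (((shiftFunctorAdd' C a (-j) (-k) (by omega)).app X).symm) hX

lemma leN_of_le {X : C} (h : X ∈ w.le) : X ∈ w.leN 0 := by
  have h0 : X⟦(0:ℤ)⟧ ∈ w.le := w.le_iso ((shiftFunctorZero C ℤ).app X) h
  show X⟦-(0:ℤ)⟧ ∈ w.le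
  rw [neg_zero]
  exact h0

lemma geN_of_ge {X : C} (h : X ∈ w.ge) : X ∈ w.geN 0 := by
  have h0 : X⟦(0:ℤ)⟧ ∈ w.ge := w.ge_iso ((shiftFunctorZero C ℤ).app X) h
  show X⟦-(0:ℤ)⟧ ∈ w.ge
  rw [neg_zero]
  exact h0

lemma leN_succ {X : C} (k : ℤ) (hX : X ∈ w.leN k) : X ∈ w.leN (k+1) :=
  w.le_iso ((shiftFunctorAdd' C (-k) (-1) (-(k+1)) (by omega)).app X) (w.le_shift _ hX)

lemma geN_pred {X : C} (k : ℤ) (hX : X ∈ w.geN (k+1)) : X ∈ w.geN k :=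
  w.ge_iso ((shiftFunctorAdd' C (-(k+1)) 1 (-k) (by omega)).app X) (w.ge_shift _ hX)

lemma leN_mono {X : C} {k j : ℤ} (h : k ≤ j) (hX : X ∈ w.leN k) : X ∈ w.leN j := by
  obtain ⟨d, rfl⟩ := Int.le.dest h
  clear h
  induction d with
  | zero => simpa using hX
  | succ d ih =>
      have h2 := w.leN_succ _ ih
      have heq : k + (d:ℤ) + 1 = k + ((d+1 : ℕ) : ℤ) := by push_cast; ring
      rwa [heq] at h2

lemma geN_anti {X : C} {k j : ℤ} (h : k ≤ j) (hX : X ∈ w.geN j) : X ∈ w.geN k := by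
  obtain ⟨d, rfl⟩ := Int.le.dest h
  clear h
  revert hX
  induction d with
  | zero => intro hX; simpa using hX
  | succ d ih =>
      intro hX
      apply ih
      apply w.geN_pred
      have heq : k + (d:ℤ) + 1 = k + ((d+1 : ℕ) : ℤ) := by push_cast; ring
      rwa [← heq] at hX

lemma orth {X Y : C} {k j : ℤ} (h : k < j) (hX : X ∈ w.leN k) (hY : Y ∈ w.geN j)
    (f : X ⟶ Y) : f = 0 := by
  have hY' : Y ∈ w.geN (k + 1) := w.geN_anti (by omega) hY
  have h2 : (Y⟦-k⟧)⟦(-1:ℤ)⟧ ∈ w.ge :=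
    w.ge_iso (((shiftFunctorAdd' C (-k) (-1) (-(k+1)) (by omega)).app Y).symm) hY'
  have h0 : (shiftFunctor C (-k)).map f = 0 := w.orthogonal hX h2 _
  exact (shiftFunctor C (-k)).map_injective (by rw [h0, Functor.map_zero])

lemma shift_mem_heart {X : C} {n : ℤ} (h1 : X ∈ w.leN n) (h2 : X ∈ w.geN n) :
    X⟦-n⟧ ∈ w.heart :=
  ⟨w.leN_shift (-n) 0 (by omega) h1, w.geN_shift (-n) 0 (by omega) h2⟩

lemma decompAt (M : C) (k : ℤ) :
    ∃ (A B : C) (f : A ⟶ M) (g : M ⟶ B) (δ : B ⟶ A⟦(1:ℤ)⟧),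
      (Triangle.mk f g δ ∈ distTriang C) ∧ A ∈ w.leN k ∧ B ∈ w.geN (k+1) := by
  obtain ⟨A₀, B₀, f₀, g₀, δ₀, hT₀, hA₀, hB₀⟩ := w.exists_decomp (M⟦-k⟧)
  have hT₂ := Triangle.shift_distinguished (Triangle.mk f₀ g₀ δ₀) hT₀ k
  rw [Triangle.shiftFunctor_eq] at hT₂
  let e : (M⟦-k⟧)⟦k⟧ ≅ M := (shiftFunctorCompIsoId C (-k) k (by omega)).app M
  refine ⟨A₀⟦k⟧, B₀⟦k⟧,
    (k.negOnePow • (shiftFunctor C k).map f₀) ≫ e.hom,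
    e.inv ≫ (k.negOnePow • (shiftFunctor C k).map g₀),
    k.negOnePow • ((shiftFunctor C k).map δ₀ ≫ (shiftFunctorComm C 1 k).hom.app A₀),
    ?_, ?_, ?_⟩
  · refine isomorphic_distinguished _ hT₂ _ ?_
    refine Triangle.isoMk _ _ (Iso.refl _) e.symm (Iso.refl _) ?_ ?_ ?_
    · show ((k.negOnePow • (shiftFunctor C k).map f₀) ≫ e.hom) ≫ e.inv =
        𝟙 _ ≫ (k.negOnePow • (shiftFunctor C k).map f₀)
      dsimp [e]
      simp [Linear.units_smul_comp, Linear.comp_units_smul]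
    · show (e.inv ≫ (k.negOnePow • (shiftFunctor C k).map g₀)) ≫ 𝟙 _ =
        e.inv ≫ (k.negOnePow • (shiftFunctor C k).map g₀)
      dsimp [e]
      simp [Linear.units_smul_comp, Linear.comp_units_smul]
    · show (k.negOnePow • ((shiftFunctor C k).map δ₀ ≫ (shiftFunctorComm C 1 k).hom.app A₀)) ≫
          (shiftFunctor C 1).map (𝟙 _) =
        𝟙 _ ≫ (k.negOnePow • ((shiftFunctor C k).map δ₀ ≫ (shiftFunctorComm C 1 k).hom.app A₀))
      dsimp [e]
      simp [Linear.units_smul_comp, Linear.comp_units_smul]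
  · exact w.leN_shift k k (by omega) (w.leN_of_le hA₀)
  · exact w.geN_shift k (k+1) (by omega) hB₀


lemma extLE {k : ℤ} {T : Triangle C} (hT : T ∈ distTriang C)
    (h₁ : T.obj₁ ∈ w.leN k) (h₃ : T.obj₃ ∈ w.leN k) : T.obj₂ ∈ w.leN k := by
  obtain ⟨A, B, u, v, δ, hS, hA, hB⟩ := w.decompAt T.obj₂ k
  have hv : v = 0 := by
    obtain ⟨c, hc⟩ := Triangle.yoneda_exact₂ T hT v (w.orth (by omega) h₁ hB _)
    rw [hc, w.orth (by omega : k < k + 1) h₃ hB c, comp_zero]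
  obtain ⟨s, hs⟩ := Triangle.coyoneda_exact₂ _ hS (𝟙 T.obj₂)
    (by simp only [Triangle.mk_mor₂, hv]; exact comp_zero)
  exact w.leN_retract s u hs.symm hA

lemma extGE {k : ℤ} {T : Triangle C} (hT : T ∈ distTriang C)
    (h₁ : T.obj₁ ∈ w.geN k) (h₃ : T.obj₃ ∈ w.geN k) : T.obj₂ ∈ w.geN k := by
  obtain ⟨A, B, u, v, δ, hS, hA, hB⟩ := w.decompAt T.obj₂ (k-1)
  rw [sub_add_cancel] at hB
  have hu : u = 0 := by
    obtain ⟨c, hc⟩ := Triangle.coyoneda_exact₂ T hT u (w.orth (by omega : k - 1 < k) hA h₃ _)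
    rw [hc, w.orth (by omega : k - 1 < k) hA h₁ c, zero_comp]
  obtain ⟨s, hs⟩ := Triangle.yoneda_exact₂ _ hS (𝟙 T.obj₂)
    (by simp only [Triangle.mk_mor₁, hu]; exact zero_comp)
  exact w.geN_retract v s hs.symm hB

end WeightStructure

section Functorial

variable {C₁ : Type*} [Category C₁] [Preadditive C₁] [HasZeroObject C₁] [HasShift C₁ ℤ]
  [∀ n : ℤ, (CategoryTheory.shiftFunctor C₁ n).Additive] [Pretriangulated C₁]
  {C₂ : Type*} [Category C₂] [Preadditive C₂] [HasZeroObject C₂] [HasShift C₂ ℤ]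
  [∀ n : ℤ, (CategoryTheory.shiftFunctor C₂ n).Additive] [Pretriangulated C₂]
  {w₁ : WeightStructure C₁} {w₂ : WeightStructure C₂}
  {r : C₁ ⥤ C₂} [r.Additive] [r.CommShift ℤ] [r.IsTriangulated]

lemma rLeN (hwe : WeightExact w₁ w₂ r) {X : C₁} {k : ℤ} (h : X ∈ w₁.leN k) :
    r.obj X ∈ w₂.leN k :=
  w₂.le_iso ((r.commShiftIso (-k)).app X).symm (hwe.1 _ h)

lemma rGeN (hwe : WeightExact w₁ w₂ r) {X : C₁} {k : ℤ} (h : X ∈ w₁.geN k) :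
    r.obj X ∈ w₂.geN k :=
  w₂.ge_iso ((r.commShiftIso (-k)).app X).symm (hwe.2 _ h)

variable (hfull : ∀ X Y : C₁, X ∈ w₁.heart → Y ∈ w₁.heart →
      ∀ g : r.obj X ⟶ r.obj Y, ∃ f : X ⟶ Y, r.map f = g)
variable (hcons : ∀ X Y : C₁, X ∈ w₁.heart → Y ∈ w₁.heart →
      ∀ f : X ⟶ Y, IsIso (r.map f) → IsIso f)

include hfull in
lemma heartFull {n : ℤ} {X Y : C₁}
    (hX1 : X ∈ w₁.leN n) (hX2 : X ∈ w₁.geN n) (hY1 : Y ∈ w₁.leN n) (hY2 : Y ∈ w₁.geN n)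
    (g : r.obj X ⟶ r.obj Y) : ∃ f : X ⟶ Y, r.map f = g := by
  obtain ⟨f₂, hf₂⟩ := hfull _ _ (w₁.shift_mem_heart hX1 hX2) (w₁.shift_mem_heart hY1 hY2)
    ((r.commShiftIso (-n)).hom.app X ≫ (shiftFunctor C₂ (-n)).map g ≫
      (r.commShiftIso (-n)).inv.app Y)
  obtain ⟨f, rfl⟩ := (shiftFunctor C₁ (-n)).map_surjective f₂
  refine ⟨f, (shiftFunctor C₂ (-n)).map_injective ?_⟩
  have h1 := (r.commShiftIso (-n)).hom.naturality f
  dsimp only [Functor.comp_map] at h1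
  rw [hf₂] at h1
  simp only [Category.assoc, Iso.inv_hom_id_app, Functor.comp_obj, Category.comp_id] at h1
  have h2 := (cancel_epi ((r.commShiftIso (-n)).hom.app X)).mp h1
  exact h2.symm

include hcons in
lemma heartCons {n : ℤ} {X Y : C₁}
    (hX1 : X ∈ w₁.leN n) (hX2 : X ∈ w₁.geN n) (hY1 : Y ∈ w₁.leN n) (hY2 : Y ∈ w₁.geN n)
    (f : X ⟶ Y) (hf : IsIso (r.map f)) : IsIso f := by
  have h1 := (r.commShiftIso (-n)).hom.naturality f
  dsimp only [Functor.comp_map] at h1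
  have h2 : r.map ((shiftFunctor C₁ (-n)).map f) =
      (r.commShiftIso (-n)).hom.app X ≫ (shiftFunctor C₂ (-n)).map (r.map f) ≫
        (r.commShiftIso (-n)).inv.app Y := by
    rw [← Category.assoc, ← h1]
    simp
  have h3 : IsIso (r.map ((shiftFunctor C₁ (-n)).map f)) := by
    rw [h2]; infer_instance
  have h4 : IsIso ((shiftFunctor C₁ (-n)).map f) :=
    hcons _ _ (w₁.shift_mem_heart hX1 hX2) (w₁.shift_mem_heart hY1 hY2) _ h3
  exact isIso_of_reflects_iso f (shiftFunctor C₁ (-n))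

include hfull in
lemma fullExtUpper (hwe : WeightExact w₁ w₂ r) {n : ℤ} {X Y : C₁}
    (hX : X ∈ w₁.leN n) (hY1 : Y ∈ w₁.leN n) (hY2 : Y ∈ w₁.geN n)
    (g : r.obj X ⟶ r.obj Y) : ∃ f : X ⟶ Y, r.map f = g := by
  obtain ⟨A, P, u, v, δ, hS, hA, hP⟩ := w₁.decompAt X (n-1)
  rw [sub_add_cancel] at hP
  have h0 : r.map u ≫ g = 0 :=
    w₂.orth (by omega) (rLeN hwe hA) (rGeN hwe hY2) _
  obtain ⟨k, hk⟩ := Triangle.yoneda_exact₂ _ (r.map_distinguished _ hS) g (by exact h0)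
  have hPle : P ∈ w₁.leN n := by
    refine w₁.extLE (rot_of_distTriang _ hS) ?_ ?_
    · exact hX
    · exact w₁.leN_shift 1 n (by omega) hA
  obtain ⟨k₁, hk₁⟩ := heartFull hfull hPle hP hY1 hY2 k
  exact ⟨v ≫ k₁, by rw [r.map_comp, hk₁]; exact hk.symm⟩

include hfull in
lemma fullExtLower (hwe : WeightExact w₁ w₂ r) {m : ℤ} {X Y : C₁}
    (hX1 : X ∈ w₁.leN m) (hX2 : X ∈ w₁.geN m) (hY : Y ∈ w₁.geN m)
    (g : r.obj X ⟶ r.obj Y) : ∃ f : X ⟶ Y, r.map f = g := by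
  obtain ⟨A, B, u, v, δ, hS, hA, hB⟩ := w₁.decompAt Y m
  have hAge : A ∈ w₁.geN m := by
    refine w₁.extGE (inv_rot_of_distTriang _ hS) ?_ ?_
    · exact w₁.geN_shift (-1) m (by omega) hB
    · exact hY
  have h0 : g ≫ r.map v = 0 :=
    w₂.orth (by omega : m < m + 1) (rLeN hwe hX1) (rGeN hwe hB) _
  obtain ⟨k, hk⟩ := Triangle.coyoneda_exact₂ _ (r.map_distinguished _ hS) g (by exact h0)
  obtain ⟨k₁, hk₁⟩ := heartFull hfull hX1 hX2 hA hAge k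
  exact ⟨k₁ ≫ u, by rw [r.map_comp, hk₁]; exact hk.symm⟩

include hfull hcons in
lemma stepUpper (hwe : WeightExact w₁ w₂ r) {n : ℤ} (hn : 1 ≤ n) {M : C₁}
    (hM : M ∈ w₁.leN n) (hrM : r.obj M ∈ w₂.leN 0) : M ∈ w₁.leN (n-1) := by
  obtain ⟨A, P, f, g, δ, hT, hA, hP⟩ := w₁.decompAt M (n-1)
  rw [sub_add_cancel] at hP
  have hPle : P ∈ w₁.leN n :=
    w₁.extLE (rot_of_distTriang _ hT) hM (w₁.leN_shift 1 n (by omega) hA)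
  have hg0 : r.map g = 0 :=
    w₂.orth (by omega : n - 1 < n) (w₂.leN_mono (by omega) hrM) (rGeN hwe hP) _
  obtain ⟨ρ, hρ⟩ := Triangle.yoneda_exact₃ _ (r.map_distinguished _ hT)
    (𝟙 (r.obj P)) (by show r.map g ≫ 𝟙 (r.obj P) = 0; rw [hg0, zero_comp])
  obtain ⟨σ, hσ⟩ := fullExtUpper hfull hwe (w₁.leN_shift 1 n (by omega) hA) hPle hP
    ((r.commShiftIso (1:ℤ)).hom.app A ≫ ρ)
  have he : r.map (δ ≫ σ) = 𝟙 (r.obj P) := by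
    rw [r.map_comp, hσ]
    exact (Category.assoc _ _ _).symm.trans hρ.symm
  have hiso : IsIso (δ ≫ σ) :=
    heartCons hcons hPle hP hPle hP _ (by rw [he]; infer_instance)
  have hgδ : g ≫ δ = 0 := comp_distTriang_mor_zero₂₃ _ hT
  have hg : g = 0 := by
    have h1 : g ≫ (δ ≫ σ) = 0 := by rw [← Category.assoc, hgδ, zero_comp]
    calc g = (g ≫ (δ ≫ σ)) ≫ inv (δ ≫ σ) := by
              rw [Category.assoc, IsIso.hom_inv_id, Category.comp_id]
      _ = 0 := by rw [h1, zero_comp]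
  obtain ⟨s, hs⟩ := Triangle.coyoneda_exact₂ _ hT (𝟙 M)
    (by show 𝟙 M ≫ g = 0; rw [hg, comp_zero])
  exact w₁.leN_retract s f hs.symm hA

include hfull hcons in
lemma stepLower (hwe : WeightExact w₁ w₂ r) {m : ℤ} (hm : m ≤ -1) {M : C₁}
    (hM : M ∈ w₁.geN m) (hrM : r.obj M ∈ w₂.geN 0) : M ∈ w₁.geN (m+1) := by
  obtain ⟨A, B, f, g, δ, hT, hA, hB⟩ := w₁.decompAt M m
  have hBneg : B⟦(-1:ℤ)⟧ ∈ w₁.geN m := w₁.geN_shift (-1) m (by omega) hB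
  have hAge : A ∈ w₁.geN m := w₁.extGE (inv_rot_of_distTriang _ hT) hBneg hM
  have hf0 : r.map f = 0 := w₂.orth (by omega : m < 0) (rLeN hwe hA) hrM _
  obtain ⟨ρ, hρ⟩ := Triangle.coyoneda_exact₂ _
    (r.map_distinguished _ (inv_rot_of_distTriang _ hT)) (𝟙 (r.obj A))
    (by show 𝟙 (r.obj A) ≫ r.map f = 0; rw [hf0, comp_zero])
  obtain ⟨σ, hσ⟩ := fullExtLower hfull hwe hA hAge hBneg ρ
  have he : r.map (σ ≫ (Triangle.mk f g δ).invRotate.mor₁) = 𝟙 (r.obj A) := by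
    refine (r.map_comp _ _).trans ?_
    rw [hσ]
    exact hρ.symm
  have hiso : IsIso (σ ≫ (Triangle.mk f g δ).invRotate.mor₁) :=
    heartCons hcons hA hAge hA hAge _ (by erw [he]; infer_instance)
  have hτf : (Triangle.mk f g δ).invRotate.mor₁ ≫ f = 0 :=
    comp_distTriang_mor_zero₁₂ _ (inv_rot_of_distTriang _ hT)
  have hfz : f = 0 := by
    have h1 : (σ ≫ (Triangle.mk f g δ).invRotate.mor₁) ≫ f = 0 := by
      erw [Category.assoc, hτf, comp_zero]
    exact (cancel_epi (σ ≫ (Triangle.mk f g δ).invRotate.mor₁)).1 (h1.trans comp_zero.symm)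
  obtain ⟨s, hs⟩ := Triangle.yoneda_exact₂ _ hT (𝟙 M)
    (by show f ≫ 𝟙 M = 0; rw [hfz, zero_comp])
  exact w₁.geN_retract g s hs.symm hB

end Functorial

end Aux

theorem statement4
    (F : Type*) [Field F] [CharZero F]
    {C₁ : Type*} [Category C₁] [Preadditive C₁] [HasZeroObject C₁] [HasShift C₁ ℤ]
    [∀ n : ℤ, (CategoryTheory.shiftFunctor C₁ n).Additive] [Pretriangulated C₁] [CategoryTheory.Linear F C₁]
    {C₂ : Type*} [Category C₂] [Preadditive C₂] [HasZeroObject C₂] [HasShift C₂ ℤ]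
    [∀ n : ℤ, (CategoryTheory.shiftFunctor C₂ n).Additive] [Pretriangulated C₂] [CategoryTheory.Linear F C₂]
    (w₁ : WeightStructure C₁) (w₂ : WeightStructure C₂)
    (r : C₁ ⥤ C₂) [r.Additive] [Functor.Linear F r] [r.CommShift ℤ] [r.IsTriangulated]
    (hbounded : w₁.Bounded)
    (hsemiprimary : SemiprimaryOn w₁.heart) (hpseudoabelian : PseudoAbelianOn w₁.heart)
    (hwe : WeightExact w₁ w₂ r)
    (hfull : ∀ X Y : C₁, X ∈ w₁.heart → Y ∈ w₁.heart →
      ∀ g : r.obj X ⟶ r.obj Y, ∃ f : X ⟶ Y, r.map f = g)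
    (hcons : ∀ X Y : C₁, X ∈ w₁.heart → Y ∈ w₁.heart →
      ∀ f : X ⟶ Y, IsIso (r.map f) → IsIso f)
    (M : C₁) :
    M ∈ w₁.heart ↔ r.obj M ∈ w₂.heart := by
  constructor
  · intro hM
    exact ⟨rLeN hwe hM.1, rGeN hwe hM.2⟩
  · intro hrM
    obtain ⟨m, n, hmn, hge, hle⟩ := hbounded M
    have hrle : r.obj M ∈ w₂.leN 0 := hrM.1
    have hrge : r.obj M ∈ w₂.geN 0 := hrM.2
    constructor
    · have key : ∀ k : ℕ, M ∈ w₁.leN (k : ℤ) → M ∈ w₁.leN 0 := by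
        intro k
        induction k with
        | zero => intro h; simpa using h
        | succ k ih =>
            intro h
            apply ih
            have h2 := stepUpper hfull hcons hwe (by omega : 1 ≤ ((k+1:ℕ):ℤ)) h hrle
            have heq : ((k+1:ℕ):ℤ) - 1 = (k:ℤ) := by push_cast; ring
            rwa [heq] at h2
      rcases le_or_gt n 0 with h | h
      · exact w₁.leN_mono h hle
      · have h3 : M ∈ w₁.leN ((n.toNat : ℤ)) := by rwa [Int.toNat_of_nonneg (by omega)]
        exact key n.toNat h3
    · have key : ∀ k : ℕ, M ∈ w₁.geN (-(k : ℤ)) → M ∈ w₁.geN 0 := by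
        intro k
        induction k with
        | zero => intro h; simpa using h
        | succ k ih =>
            intro h
            apply ih
            have h2 := stepLower hfull hcons hwe (by omega : -((k+1:ℕ):ℤ) ≤ -1) h hrge
            have heq : -((k+1:ℕ):ℤ) + 1 = -(k:ℤ) := by push_cast; ring
            rwa [heq] at h2
      rcases le_or_gt 0 m with h | h
      · exact w₁.geN_anti h hge
      · have h3 : M ∈ w₁.geN (-(((-m).toNat : ℕ) : ℤ)) := by
          rw [Int.toNat_of_nonneg (by omega)]
          simpa using hge
        exact key (-m).toNat h3

end Paper
end

section
/- Let r : C1 → C2 be an F-linear exact (triangulated) functor between F-linear triangulated categories equipped with weight structures. Assume: (1) the weight structure on C1 is bounded; (2) the heart C_{1,w=0} is semi-primary and pseudo-Abelian; (3) r is weight exact; (4) the induced functor r_{w=0} on hearts is full; (5) r_{w=0} is conservative. Then for any M ∈ C1 and any integer β: M lies in C_{1,w≥β} if and only if r(M) lies in C_{2,w≥β}. -/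
open CategoryTheory CategoryTheory.Limits CategoryTheory.Pretriangulated

namespace Paper

variable (C : Type*) [Category C] [Preadditive C] [HasZeroObject C] [HasShift C ℤ]
  [∀ n : ℤ, (CategoryTheory.shiftFunctor C n).Additive] [Pretriangulated C]

section AuxOneCat

variable {C : Type*} [Category C] [Preadditive C] [HasZeroObject C] [HasShift C ℤ]
  [∀ n : ℤ, (CategoryTheory.shiftFunctor C n).Additive] [Pretriangulated C]
  (w : WeightStructure C)

lemma aux_le_iso {X Y : C} (e : X ≅ Y) (h : Y ∈ w.le) : X ∈ w.le :=
  w.le_retract e.hom e.inv e.hom_inv_id h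

lemma aux_ge_iso {X Y : C} (e : X ≅ Y) (h : Y ∈ w.ge) : X ∈ w.ge :=
  w.ge_retract e.hom e.inv e.hom_inv_id h

lemma aux_leN_iso {X Y : C} (e : X ≅ Y) {n : ℤ} (h : Y ∈ w.leN n) : X ∈ w.leN n :=
  aux_le_iso w ((shiftFunctor C (-n)).mapIso e) h

lemma aux_geN_iso {X Y : C} (e : X ≅ Y) {n : ℤ} (h : Y ∈ w.geN n) : X ∈ w.geN n :=
  aux_ge_iso w ((shiftFunctor C (-n)).mapIso e) h

lemma aux_leN_shift {X : C} {n : ℤ} (k : ℤ) (h : X ∈ w.leN n) : X⟦k⟧ ∈ w.leN (n + k) :=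
  aux_le_iso w ((shiftFunctorAdd' C k (-(n + k)) (-n) (by ring)).app X).symm h

lemma aux_geN_shift {X : C} {n : ℤ} (k : ℤ) (h : X ∈ w.geN n) : X⟦k⟧ ∈ w.geN (n + k) :=
  aux_ge_iso w ((shiftFunctorAdd' C k (-(n + k)) (-n) (by ring)).app X).symm h

lemma aux_leN_mono {X : C} {a b : ℤ} (hab : a ≤ b) (hX : X ∈ w.leN a) : X ∈ w.leN b := by
  refine Int.le_induction (motive := fun b _ => X ∈ w.leN b) hX (fun n _ ih => ?_) b hab
  exact aux_le_iso w ((shiftFunctorAdd' C (-n) (-1) (-(n + 1)) (by ring)).app X)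
    (w.le_shift _ ih)

lemma aux_geN_anti {X : C} {a b : ℤ} (hab : a ≤ b) : X ∈ w.geN b → X ∈ w.geN a := by
  refine Int.le_induction (motive := fun b _ => X ∈ w.geN b → X ∈ w.geN a) id
    (fun n _ ih hX => ?_) b hab
  exact ih (aux_ge_iso w ((shiftFunctorAdd' C (-(n + 1)) 1 (-n) (by ring)).app X)
    (w.ge_shift _ hX))

lemma aux_hom_eq_zero {X Y : C} {a b : ℤ} (hab : a < b) (hX : X ∈ w.leN a)
    (hY : Y ∈ w.geN b) (f : X ⟶ Y) : f = 0 := by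
  have hY' : Y ∈ w.geN (a + 1) := aux_geN_anti w (by omega) hY
  have h2 : (Y⟦-a⟧)⟦(-1 : ℤ)⟧ ∈ w.ge :=
    aux_ge_iso w ((shiftFunctorAdd' C (-a) (-1) (-(a + 1)) (by ring)).app Y).symm hY'
  have h0 : (shiftFunctor C (-a)).map f = 0 := w.orthogonal hX h2 _
  apply (shiftFunctor C (-a)).map_injective
  rw [h0, Functor.map_zero]

lemma aux_leN_retract {X Y : C} {n : ℤ} (i : X ⟶ Y) (p : Y ⟶ X) (hip : i ≫ p = 𝟙 X)
    (hY : Y ∈ w.leN n) : X ∈ w.leN n :=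
  w.le_retract ((shiftFunctor C (-n)).map i) ((shiftFunctor C (-n)).map p)
    (by rw [← Functor.map_comp, hip, CategoryTheory.Functor.map_id]) hY

lemma aux_geN_retract {X Y : C} {n : ℤ} (i : X ⟶ Y) (p : Y ⟶ X) (hip : i ≫ p = 𝟙 X)
    (hY : Y ∈ w.geN n) : X ∈ w.geN n :=
  w.ge_retract ((shiftFunctor C (-n)).map i) ((shiftFunctor C (-n)).map p)
    (by rw [← Functor.map_comp, hip, CategoryTheory.Functor.map_id]) hY

lemma aux_exists_decomp_at (M : C) (n : ℤ) :
    ∃ (A B : C) (f : A ⟶ M) (g : M ⟶ B) (δ : B ⟶ A⟦(1 : ℤ)⟧),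
      (Triangle.mk f g δ ∈ distTriang C) ∧ A ∈ w.leN (n - 1) ∧ B ∈ w.geN n := by
  obtain ⟨A₀, B₀, f₀, g₀, δ₀, hT₀, hA₀, hB₀⟩ := w.exists_decomp (M⟦-(n - 1)⟧)
  have hT₁ := Pretriangulated.Triangle.shift_distinguished _ hT₀ (n - 1)
  have e : ((M⟦-(n - 1)⟧)⟦(n - 1 : ℤ)⟧ : C) ≅ M :=
    ((shiftFunctorAdd' C (-(n - 1)) (n - 1) 0 (by ring)).app M).symm ≪≫
      (shiftFunctorZero C ℤ).app M
  have hA₀' : A₀ ∈ w.leN 0 := aux_le_iso w ((shiftFunctorZero C ℤ).app A₀) hA₀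
  have hB₀' : B₀ ∈ w.geN 1 := hB₀
  have hA : (A₀⟦(n - 1 : ℤ)⟧ : C) ∈ w.leN (n - 1) := by
    have := aux_leN_shift w (n - 1) hA₀'
    rwa [zero_add] at this
  have hB : (B₀⟦(n - 1 : ℤ)⟧ : C) ∈ w.geN n := by
    have := aux_geN_shift w (n - 1) hB₀'
    rwa [show (1 : ℤ) + (n - 1) = n by omega] at this
  refine ⟨A₀⟦(n - 1 : ℤ)⟧, B₀⟦(n - 1 : ℤ)⟧,
    ((Triangle.shiftFunctor C (n - 1)).obj (Triangle.mk f₀ g₀ δ₀)).mor₁ ≫ e.hom,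
    e.inv ≫ ((Triangle.shiftFunctor C (n - 1)).obj (Triangle.mk f₀ g₀ δ₀)).mor₂,
    ((Triangle.shiftFunctor C (n - 1)).obj (Triangle.mk f₀ g₀ δ₀)).mor₃, ?_, hA, hB⟩
  refine Pretriangulated.isomorphic_distinguished _ hT₁ _ ?_
  exact Triangle.isoMk _ _ (Iso.refl _) e.symm (Iso.refl _) (by dsimp only [Triangle.mk, Iso.refl_hom, Iso.symm_hom]; erw [Category.assoc, e.hom_inv_id, Category.comp_id, Category.id_comp]; rfl) (by dsimp only [Triangle.mk, Iso.refl_hom]; erw [Category.comp_id]; rfl) (by dsimp only [Triangle.mk, Iso.refl_hom]; erw [CategoryTheory.Functor.map_id, Category.comp_id, Category.id_comp]; rfl)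

lemma aux_geN_ext {n : ℤ} {T : Triangle C} (hT : T ∈ distTriang C)
    (h₁ : T.obj₁ ∈ w.geN n) (h₃ : T.obj₃ ∈ w.geN n) : T.obj₂ ∈ w.geN n := by
  obtain ⟨A, B, f, g, δ, hT', hA, hB⟩ := aux_exists_decomp_at w T.obj₂ n
  have h1 : f ≫ T.mor₂ = 0 := aux_hom_eq_zero w (by omega) hA h₃ _
  obtain ⟨a, ha⟩ := Pretriangulated.Triangle.coyoneda_exact₂ T hT f h1
  have ha0 : a = 0 := aux_hom_eq_zero w (by omega) hA h₁ a
  have hf : f = 0 := by rw [ha, ha0, zero_comp]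
  obtain ⟨ρ, hρ⟩ := Pretriangulated.Triangle.yoneda_exact₂ _ hT' (𝟙 T.obj₂)
    (by change f ≫ 𝟙 T.obj₂ = 0; rw [hf, zero_comp])
  exact aux_geN_retract w g ρ hρ.symm hB

lemma aux_leN_ext {n : ℤ} {T : Triangle C} (hT : T ∈ distTriang C)
    (h₁ : T.obj₁ ∈ w.leN n) (h₃ : T.obj₃ ∈ w.leN n) : T.obj₂ ∈ w.leN n := by
  obtain ⟨A, B, f, g, δ, hT', hA, hB⟩ := aux_exists_decomp_at w T.obj₂ (n + 1)
  rw [add_sub_cancel_right] at hA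
  have h1 : T.mor₁ ≫ g = 0 := aux_hom_eq_zero w (by omega) h₁ hB _
  obtain ⟨t, ht⟩ := Pretriangulated.Triangle.yoneda_exact₂ T hT g h1
  have ht0 : t = 0 := aux_hom_eq_zero w (by omega) h₃ hB t
  have hg : g = 0 := by rw [ht, ht0, comp_zero]
  obtain ⟨σ, hσ⟩ := Pretriangulated.Triangle.coyoneda_exact₂ _ hT' (𝟙 T.obj₂)
    (by change 𝟙 T.obj₂ ≫ g = 0; rw [hg, comp_zero])
  exact aux_leN_retract w σ f hσ.symm hA

end AuxOneCat

section AuxTwoCat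

variable {C₁ : Type*} [Category C₁] [Preadditive C₁] [HasZeroObject C₁] [HasShift C₁ ℤ]
  [∀ n : ℤ, (CategoryTheory.shiftFunctor C₁ n).Additive] [Pretriangulated C₁]
  {C₂ : Type*} [Category C₂] [Preadditive C₂] [HasZeroObject C₂] [HasShift C₂ ℤ]
  [∀ n : ℤ, (CategoryTheory.shiftFunctor C₂ n).Additive] [Pretriangulated C₂]
  (w₁ : WeightStructure C₁) (w₂ : WeightStructure C₂)
  (r : C₁ ⥤ C₂) [r.Additive] [r.CommShift ℤ]

set_option linter.unusedSectionVars false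

include w₁ w₂

lemma aux_map_leN (hwe : WeightExact w₁ w₂ r) {X : C₁} {n : ℤ} (h : X ∈ w₁.leN n) :
    r.obj X ∈ w₂.leN n :=
  aux_le_iso w₂ ((r.commShiftIso (-n)).app X).symm (hwe.1 _ h)

lemma aux_map_geN (hwe : WeightExact w₁ w₂ r) {X : C₁} {n : ℤ} (h : X ∈ w₁.geN n) :
    r.obj X ∈ w₂.geN n :=
  aux_ge_iso w₂ ((r.commShiftIso (-n)).app X).symm (hwe.2 _ h)

lemma aux_heart_shift {X : C₁} {k : ℤ} (h1 : X ∈ w₁.leN k) (h2 : X ∈ w₁.geN k) :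
    (X⟦-k⟧ : C₁) ∈ w₁.heart :=
  ⟨aux_le_iso w₁ ((shiftFunctorZero C₁ ℤ).app (X⟦-k⟧)) h1,
   aux_ge_iso w₁ ((shiftFunctorZero C₁ ℤ).app (X⟦-k⟧)) h2⟩

lemma aux_full_lift
    (hfull : ∀ X Y : C₁, X ∈ w₁.heart → Y ∈ w₁.heart →
      ∀ g : r.obj X ⟶ r.obj Y, ∃ f : X ⟶ Y, r.map f = g)
    {k : ℤ} {X Y : C₁} (hX1 : X ∈ w₁.leN k) (hX2 : X ∈ w₁.geN k)
    (hY1 : Y ∈ w₁.leN k) (hY2 : Y ∈ w₁.geN k)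
    (g : r.obj X ⟶ r.obj Y) : ∃ f : X ⟶ Y, r.map f = g := by
  obtain ⟨f₀, hf₀⟩ := hfull _ _ (aux_heart_shift w₁ w₂ hX1 hX2) (aux_heart_shift w₁ w₂ hY1 hY2)
    ((r.commShiftIso (-k)).hom.app X ≫ (shiftFunctor C₂ (-k)).map g ≫
      (r.commShiftIso (-k)).inv.app Y)
  obtain ⟨f, hf⟩ := (shiftFunctor C₁ (-k)).map_surjective f₀
  refine ⟨f, (shiftFunctor C₂ (-k)).map_injective ?_⟩
  have hnat := (r.commShiftIso (-k)).hom.naturality f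
  simp only [Functor.comp_map] at hnat
  rw [hf, hf₀] at hnat
  simp only [Category.assoc, Iso.inv_hom_id_app, Category.comp_id] at hnat
  simpa using ((cancel_epi ((r.commShiftIso (-k)).hom.app X)).mp hnat).symm

lemma aux_cons_shift
    (hcons : ∀ X Y : C₁, X ∈ w₁.heart → Y ∈ w₁.heart →
      ∀ f : X ⟶ Y, IsIso (r.map f) → IsIso f)
    {k : ℤ} {X Y : C₁} (hX1 : X ∈ w₁.leN k) (hX2 : X ∈ w₁.geN k)
    (hY1 : Y ∈ w₁.leN k) (hY2 : Y ∈ w₁.geN k)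
    (f : X ⟶ Y) (hiso : IsIso (r.map f)) : IsIso f := by
  have hnat := (r.commShiftIso (-k)).hom.naturality f
  simp only [Functor.comp_map] at hnat
  have h0 : r.map ((shiftFunctor C₁ (-k)).map f)
      = (r.commShiftIso (-k)).hom.app X ≫ (shiftFunctor C₂ (-k)).map (r.map f) ≫
        (r.commShiftIso (-k)).inv.app Y := by
    rw [← Category.assoc, ← hnat, Category.assoc, Iso.hom_inv_id_app, Category.comp_id]
  have : IsIso (r.map ((shiftFunctor C₁ (-k)).map f)) := by
    rw [h0]; infer_instance
  have : IsIso ((shiftFunctor C₁ (-k)).map f) :=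
    hcons _ _ (aux_heart_shift w₁ w₂ hX1 hX2) (aux_heart_shift w₁ w₂ hY1 hY2) _ this
  exact isIso_of_reflects_iso f (shiftFunctor C₁ (-k))

lemma aux_full_ext [r.IsTriangulated] (hwe : WeightExact w₁ w₂ r)
    (hfull : ∀ X Y : C₁, X ∈ w₁.heart → Y ∈ w₁.heart →
      ∀ g : r.obj X ⟶ r.obj Y, ∃ f : X ⟶ Y, r.map f = g)
    {k : ℤ} {X B : C₁} (hX1 : X ∈ w₁.leN k) (hX2 : X ∈ w₁.geN k) (hB : B ∈ w₁.geN k)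
    (g : r.obj X ⟶ r.obj B) : ∃ φ : X ⟶ B, r.map φ = g := by
  obtain ⟨B₁, B₂, f₁, g₁, δ₁, hT, hB₁, hB₂⟩ := aux_exists_decomp_at w₁ B (k + 1)
  rw [add_sub_cancel_right] at hB₁
  have hB₂' : (B₂⟦(-1 : ℤ)⟧ : C₁) ∈ w₁.geN k := by
    have := aux_geN_shift w₁ (-1) hB₂
    rwa [show k + 1 + (-1 : ℤ) = k by ring] at this
  have hB₁ge : B₁ ∈ w₁.geN k :=
    aux_geN_ext w₁ (inv_rot_of_distTriang _ hT) hB₂' hB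
  have h0 : g ≫ r.map g₁ = 0 :=
    aux_hom_eq_zero w₂ (by omega) (aux_map_leN w₁ w₂ r hwe hX1)
      (aux_map_geN w₁ w₂ r hwe hB₂) _
  obtain ⟨u, hu⟩ := Pretriangulated.Triangle.coyoneda_exact₂ _
    (r.map_distinguished _ hT) g h0
  obtain ⟨v, hv⟩ := aux_full_lift w₁ w₂ r hfull hX1 hX2 hB₁ hB₁ge u
  exact ⟨v ≫ f₁, by rw [r.map_comp, hv]; exact hu.symm⟩

lemma aux_step [r.IsTriangulated] (hwe : WeightExact w₁ w₂ r)
    (hfull : ∀ X Y : C₁, X ∈ w₁.heart → Y ∈ w₁.heart →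
      ∀ g : r.obj X ⟶ r.obj Y, ∃ f : X ⟶ Y, r.map f = g)
    (hcons : ∀ X Y : C₁, X ∈ w₁.heart → Y ∈ w₁.heart →
      ∀ f : X ⟶ Y, IsIso (r.map f) → IsIso f)
    (M : C₁) (m : ℤ) (hM : M ∈ w₁.geN m) (hrM : r.obj M ∈ w₂.geN (m + 1)) :
    M ∈ w₁.geN (m + 1) := by
  obtain ⟨A, B, f, g, δ, hT, hA, hB⟩ := aux_exists_decomp_at w₁ M (m + 1)
  rw [add_sub_cancel_right] at hA
  have hB' : (B⟦(-1 : ℤ)⟧ : C₁) ∈ w₁.geN m := by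
    have := aux_geN_shift w₁ (-1) hB
    rwa [show m + 1 + (-1 : ℤ) = m by ring] at this
  have hAge : A ∈ w₁.geN m :=
    aux_geN_ext w₁ (inv_rot_of_distTriang _ hT) hB' hM
  -- r.map f = 0
  have hrf : r.map f = 0 :=
    aux_hom_eq_zero w₂ (by omega) (aux_map_leN w₁ w₂ r hwe hA) hrM _
  -- mapped triangle; get a section of r.map δ
  have hT₂ := r.map_distinguished _ hT
  have hT₂rot := rot_of_distTriang _ hT₂
  obtain ⟨s, hs⟩ := Pretriangulated.Triangle.coyoneda_exact₃ _ hT₂rot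
    (𝟙 ((r.mapTriangle.obj (Triangle.mk f g δ)).rotate.obj₃)) (by
      change 𝟙 _ ≫ (-(shiftFunctor C₂ 1).map (r.map f)) = 0
      rw [hrf, Functor.map_zero, neg_zero, comp_zero])
  -- hs : 𝟙 _ = s ≫ (rotate).mor₂  with mor₂ = r.map δ ≫ (commShiftIso 1).hom.app A
  set e := (r.commShiftIso (1 : ℤ)).app A with he
  have hs' : s ≫ (r.map δ ≫ e.hom) = 𝟙 ((r.obj A)⟦(1 : ℤ)⟧) := by
    exact hs.symm
  have hsδ : s ≫ r.map δ = e.inv := by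
    have h := hs'
    erw [← Category.assoc] at h
    exact (Iso.comp_hom_eq_id e).mp h
  -- fullness gives σ : A⟦1⟧ ⟶ B with r.map σ = e.hom ≫ s
  have hA1le : (A⟦(1 : ℤ)⟧ : C₁) ∈ w₁.leN (m + 1) := by
    have := aux_leN_shift w₁ 1 hA
    exact this
  have hA1ge : (A⟦(1 : ℤ)⟧ : C₁) ∈ w₁.geN (m + 1) := by
    have := aux_geN_shift w₁ 1 hAge
    exact this
  obtain ⟨σ, hσ⟩ := aux_full_ext w₁ w₂ r hwe hfull hA1le hA1ge hB (e.hom ≫ s)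
  have hr : r.map (σ ≫ δ) = 𝟙 (r.obj (A⟦(1 : ℤ)⟧)) := by
    erw [r.map_comp, hσ, Category.assoc, hsδ, Iso.hom_inv_id]
  have hiso : IsIso (σ ≫ δ) := by
    refine aux_cons_shift w₁ w₂ r hcons hA1le hA1ge hA1le hA1ge (σ ≫ δ) ?_
    rw [hr]; infer_instance
  -- δ is split epi, hence f⟦1⟧ = 0, hence f = 0
  have hδf : δ ≫ (shiftFunctor C₁ (1 : ℤ)).map f = 0 :=
    comp_distTriang_mor_zero₃₁ _ hT
  have hf1 : (shiftFunctor C₁ (1 : ℤ)).map f = 0 := by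
    have : (inv (σ ≫ δ) ≫ σ) ≫ δ = 𝟙 _ := by
      rw [Category.assoc, IsIso.inv_hom_id]
    calc (shiftFunctor C₁ (1 : ℤ)).map f
        = 𝟙 _ ≫ (shiftFunctor C₁ (1 : ℤ)).map f := (Category.id_comp _).symm
      _ = ((inv (σ ≫ δ) ≫ σ) ≫ δ) ≫ (shiftFunctor C₁ (1 : ℤ)).map f := by rw [this]
      _ = (inv (σ ≫ δ) ≫ σ) ≫ (δ ≫ (shiftFunctor C₁ (1 : ℤ)).map f) := by
          rw [Category.assoc]
      _ = 0 := by rw [hδf, comp_zero]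
  have hf : f = 0 := by
    apply (shiftFunctor C₁ (1 : ℤ)).map_injective
    rw [hf1, Functor.map_zero]
  obtain ⟨ρ, hρ⟩ := Pretriangulated.Triangle.yoneda_exact₂ _ hT (𝟙 M)
    (by change f ≫ 𝟙 M = 0; rw [hf, zero_comp])
  exact aux_geN_retract w₁ g ρ hρ.symm hB

end AuxTwoCat


theorem statement6
    (F : Type*) [Field F] [CharZero F]
    {C₁ : Type*} [Category C₁] [Preadditive C₁] [HasZeroObject C₁] [HasShift C₁ ℤ]
    [∀ n : ℤ, (CategoryTheory.shiftFunctor C₁ n).Additive] [Pretriangulated C₁] [CategoryTheory.Linear F C₁]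
    {C₂ : Type*} [Category C₂] [Preadditive C₂] [HasZeroObject C₂] [HasShift C₂ ℤ]
    [∀ n : ℤ, (CategoryTheory.shiftFunctor C₂ n).Additive] [Pretriangulated C₂] [CategoryTheory.Linear F C₂]
    (w₁ : WeightStructure C₁) (w₂ : WeightStructure C₂)
    (r : C₁ ⥤ C₂) [r.Additive] [Functor.Linear F r] [r.CommShift ℤ] [r.IsTriangulated]
    (hbounded : w₁.Bounded)
    (hsemiprimary : SemiprimaryOn w₁.heart) (hpseudoabelian : PseudoAbelianOn w₁.heart)
    (hwe : WeightExact w₁ w₂ r)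
    (hfull : ∀ X Y : C₁, X ∈ w₁.heart → Y ∈ w₁.heart →
      ∀ g : r.obj X ⟶ r.obj Y, ∃ f : X ⟶ Y, r.map f = g)
    (hcons : ∀ X Y : C₁, X ∈ w₁.heart → Y ∈ w₁.heart →
      ∀ f : X ⟶ Y, IsIso (r.map f) → IsIso f)
    (M : C₁) (β : ℤ) :
    M ∈ w₁.geN β ↔ r.obj M ∈ w₂.geN β := by
  constructor
  · intro h
    exact aux_map_geN w₁ w₂ r hwe h
  · intro h
    obtain ⟨m, n, hmn, hm, hn⟩ := hbounded M
    have main : ∀ d : ℕ, ∀ M : C₁, M ∈ w₁.geN (β - d) → r.obj M ∈ w₂.geN β →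
        M ∈ w₁.geN β := by
      intro d
      induction d with
      | zero => intro M hM _; simpa using hM
      | succ d ih =>
        intro M hM hrM
        have hstep := aux_step w₁ w₂ r hwe hfull hcons M (β - (d + 1 : ℕ)) hM
          (by
            refine aux_geN_anti w₂ ?_ hrM
            push_cast; omega)
        rw [show (β - (d + 1 : ℕ) + 1 : ℤ) = β - d by push_cast; ring] at hstep
        exact ih M hstep hrM
    rcases le_or_gt β m with hβm | hmβ
    · exact aux_geN_anti w₁ hβm hm
    · have hM' : M ∈ w₁.geN (β - ((β - m).toNat : ℤ)) := by
        rw [Int.toNat_of_nonneg (by omega), show β - (β - m) = m by ring]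
        exact hm
      exact main (β - m).toNat M hM' h

end Paper
end
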